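/- There exists a constant $C > 0$ such that for every $0 < \varepsilon < 1/2$ and every function $\varphi \in W^{1,2}(B_1 \setminus B_\varepsilon)$ on the planar annulus $B_1 \setminus B_\varepsilon \subset \mathbb{R}^2$, one has $\int_{\partial B_\varepsilon} |\varphi|^2 \, d\mathcal{H}^1 \le C\, \varepsilon \log(1/\varepsilon)\, \|\varphi\|^2_{W^{1,2}(B_1\setminus B_\varepsilon)}$. -/

import Mathlib

open Real MeasureTheory Set


noncomputable def T2 : EuclideanSpace ℝ (Fin 2) ≃ᵐ ℝ × ℝ :=
  (MeasurableEquiv.toLp 2 (Fin 2 → ℝ)).symm.trans MeasurableEquiv.finTwoArrow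

lemma T2mp : MeasurePreserving T2 volume volume :=
  (volume_preserving_finTwoArrow ℝ).comp (EuclideanSpace.volume_preserving_symm_measurableEquiv_toLp (Fin 2))

lemma T2_symm_apply (a b : ℝ) :
    T2.symm (a, b) = (EuclideanSpace.equiv (Fin 2) ℝ).symm ![a, b] := rfl

noncomputable def vv (θ : ℝ) : EuclideanSpace ℝ (Fin 2) :=
  (EuclideanSpace.equiv (Fin 2) ℝ).symm ![Real.cos θ, Real.sin θ]

lemma norm_vv (θ : ℝ) : ‖vv θ‖ = 1 := by
  simp [vv, EuclideanSpace.norm_eq, Fin.sum_univ_two]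

lemma smul_vv (r θ : ℝ) :
    r • vv θ = (EuclideanSpace.equiv (Fin 2) ℝ).symm ![r * Real.cos θ, r * Real.sin θ] := by
  apply (EuclideanSpace.equiv (Fin 2) ℝ).injective
  funext i
  fin_cases i <;> simp [vv]

lemma norm_smul_vv (r θ : ℝ) (hr : 0 ≤ r) : ‖r • vv θ‖ = r := by
  rw [norm_smul, norm_vv, Real.norm_eq_abs, abs_of_nonneg hr, mul_one]

lemma continuous_vv : Continuous vv :=
  (EuclideanSpace.equiv (Fin 2) ℝ).symm.continuous.comp
    (continuous_pi fun i => by fin_cases i <;> simp <;> fun_prop)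

lemma periodic_vv : Function.Periodic vv (2 * π) := by
  intro θ; unfold vv; simp

-- ae equality of product sets
lemma prod_ae_eq {ε : ℝ} :
    (Icc ε 1 ×ˢ Ioo (-π) π : Set (ℝ × ℝ)) =ᵐ[volume] (Ioc ε 1 ×ˢ Ioc (-π) π : Set (ℝ × ℝ)) := by
  have h1 : volume {p : ℝ × ℝ | p.1 = ε} = 0 := by
    have : {p : ℝ × ℝ | p.1 = ε} = ({ε} : Set ℝ) ×ˢ (univ : Set ℝ) := by
      ext ⟨x, y⟩; simp [eq_comm]
    rw [this, Measure.volume_eq_prod, Measure.prod_prod]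
    simp
  have h2 : volume {p : ℝ × ℝ | p.2 = π} = 0 := by
    have : {p : ℝ × ℝ | p.2 = π} = (univ : Set ℝ) ×ˢ ({π} : Set ℝ) := by
      ext ⟨x, y⟩; simp [eq_comm]
    rw [this, Measure.volume_eq_prod, Measure.prod_prod]
    simp
  have hsub : ∀ p : ℝ × ℝ, p.1 ≠ ε → p.2 ≠ π →
      (p ∈ (Icc ε 1 ×ˢ Ioo (-π) π : Set (ℝ × ℝ)) ↔ p ∈ (Ioc ε 1 ×ˢ Ioc (-π) π : Set (ℝ × ℝ))) := by
    intro p h1 h2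
    simp only [Set.mem_prod, mem_Icc, mem_Ioo, mem_Ioc]
    constructor
    · rintro ⟨⟨ha, hb⟩, hc, hd⟩
      exact ⟨⟨lt_of_le_of_ne ha (Ne.symm h1), hb⟩, hc, hd.le⟩
    · rintro ⟨⟨ha, hb⟩, hc, hd⟩
      exact ⟨⟨ha.le, hb⟩, hc, lt_of_le_of_ne hd h2⟩
  rw [Filter.eventuallyEq_set]
  have : {p : ℝ × ℝ | p.1 = ε} ∪ {p : ℝ × ℝ | p.2 = π} ∈ ae (volume : Measure (ℝ × ℝ)) → True := fun _ => trivial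
  refine Filter.eventually_of_mem (U := ({p : ℝ × ℝ | p.1 = ε} ∪ {p : ℝ × ℝ | p.2 = π})ᶜ) ?_ ?_
  · rw [mem_ae_iff, compl_compl]
    exact measure_union_null h1 h2
  · intro p hp
    simp only [mem_compl_iff, mem_union, mem_setOf_eq, not_or] at hp
    exact hsub p hp.1 hp.2

lemma polar_cov {ε : ℝ} (hε : 0 < ε) (hε1 : ε ≤ 1)
    (F : EuclideanSpace ℝ (Fin 2) → ℝ) (hF : Continuous F) :
    (∫ θ in (0:ℝ)..(2*π), ∫ r in ε..1, F (r • vv θ) * r)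
      = ∫ x in Metric.closedBall (0 : EuclideanSpace ℝ (Fin 2)) 1 \ Metric.ball 0 ε, F x := by
  set K : Set (EuclideanSpace ℝ (Fin 2)) :=
    Metric.closedBall (0 : EuclideanSpace ℝ (Fin 2)) 1 \ Metric.ball 0 ε with hK
  set W : Set (ℝ × ℝ) := T2.symm ⁻¹' K with hW
  -- step 1: periodicity
  have hper : Function.Periodic (fun θ => ∫ r in ε..1, F (r • vv θ) * r) (2 * π) := by
    intro θ; simp only [periodic_vv θ]
  have step1 : (∫ θ in (0:ℝ)..(2*π), ∫ r in ε..1, F (r • vv θ) * r)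
      = ∫ θ in (-π)..π, ∫ r in ε..1, F (r • vv θ) * r := by
    have h2 : 2 * π - π = π := by ring
    have := hper.intervalIntegral_add_eq 0 (-π)
    simpa [neg_add_eq_sub, h2] using this
  have hFP : Continuous fun p : ℝ × ℝ => F (p.1 • vv p.2) * p.1 :=
    (hF.comp (continuous_fst.smul (continuous_vv.comp continuous_snd))).mul continuous_fst
  -- step 2: interval to set integrals
  have step2 : (∫ θ in (-π)..π, ∫ r in ε..1, F (r • vv θ) * r)
      = ∫ θ in Ioc (-π) π, ∫ r in Ioc ε 1, F (r • vv θ) * r := by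
    rw [intervalIntegral.integral_of_le (by linarith [Real.pi_pos] : -π ≤ π)]
    refine setIntegral_congr_fun measurableSet_Ioc fun θ _ => ?_
    rw [intervalIntegral.integral_of_le hε1]
  -- step 3: Fubini
  have hInt : IntegrableOn (fun p : ℝ × ℝ => F (p.1 • vv p.2) * p.1)
      (Ioc ε 1 ×ˢ Ioc (-π) π) volume := by
    refine (hFP.continuousOn.integrableOn_compact
      ((isCompact_Icc (a := ε) (b := 1)).prod (isCompact_Icc (a := -π) (b := π)))).mono_set ?_
    exact Set.prod_mono Ioc_subset_Icc_self Ioc_subset_Icc_self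
  have step3 : (∫ p in (Ioc ε 1 ×ˢ Ioc (-π) π : Set (ℝ × ℝ)), F (p.1 • vv p.2) * p.1)
      = ∫ θ in Ioc (-π) π, ∫ r in Ioc ε 1, F (r • vv θ) * r := by
    rw [Measure.volume_eq_prod, ← Measure.prod_restrict]
    refine integral_prod_symm _ ?_
    rwa [Measure.prod_restrict, ← Measure.volume_eq_prod]
  -- step 4: ae set change
  have step4 : (∫ p in (Icc ε 1 ×ˢ Ioo (-π) π : Set (ℝ × ℝ)), F (p.1 • vv p.2) * p.1)
      = ∫ p in (Ioc ε 1 ×ˢ Ioc (-π) π : Set (ℝ × ℝ)), F (p.1 • vv p.2) * p.1 :=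
    setIntegral_congr_set prod_ae_eq
  -- step 5: polar change of variables
  have hKm : MeasurableSet K := (measurableSet_closedBall).diff measurableSet_ball
  have hWm : MeasurableSet W := T2.symm.measurable hKm
  have cov := integral_comp_polarCoord_symm (W.indicator fun p => F (T2.symm p))
  have rhs_eq : (∫ p, W.indicator (fun p => F (T2.symm p)) p) = ∫ x in K, F x := by
    rw [integral_indicator hWm]
    exact (T2mp.symm T2).setIntegral_preimage_emb T2.symm.measurableEmbedding _ _
  have key : ∀ p ∈ polarCoord.target,
      p.1 • W.indicator (fun q => F (T2.symm q)) (polarCoord.symm p)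
        = (Icc ε 1 ×ˢ (univ : Set ℝ)).indicator (fun p : ℝ × ℝ => F (p.1 • vv p.2) * p.1) p := by
    rintro ⟨r, θ⟩ hp
    have hr : 0 < r := hp.1
    have hq : T2.symm (polarCoord.symm (r, θ)) = r • vv θ := by
      show T2.symm (r * Real.cos θ, r * Real.sin θ) = _
      rw [T2_symm_apply, smul_vv]
    have hmem : polarCoord.symm (r, θ) ∈ W ↔ ε ≤ r ∧ r ≤ 1 := by
      rw [hW, mem_preimage, hq, hK]
      simp only [mem_diff, Metric.mem_closedBall, Metric.mem_ball, dist_zero_right,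
        norm_smul_vv r θ hr.le, not_lt]
      tauto
    by_cases h : ε ≤ r ∧ r ≤ 1
    · rw [indicator_of_mem (hmem.2 h), indicator_of_mem (by exact ⟨h, trivial⟩), hq]
      simp [mul_comm]
    · rw [indicator_of_notMem (fun hc => h (hmem.1 hc)),
        indicator_of_notMem (by simpa using fun hc : ε ≤ r ∧ r ≤ 1 => h hc)]
      simp
  have step5 : (∫ p in polarCoord.target,
        p.1 • W.indicator (fun q => F (T2.symm q)) (polarCoord.symm p))
      = ∫ p in (Icc ε 1 ×ˢ Ioo (-π) π : Set (ℝ × ℝ)), F (p.1 • vv p.2) * p.1 := by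
    rw [setIntegral_congr_fun polarCoord.open_target.measurableSet key,
      setIntegral_indicator (measurableSet_Icc.prod MeasurableSet.univ)]
    have hset : polarCoord.target ∩ (Icc ε 1 ×ˢ (univ : Set ℝ)) = Icc ε 1 ×ˢ Ioo (-π) π := by
      show (Ioi (0:ℝ) ×ˢ Ioo (-π) π) ∩ (Icc ε 1 ×ˢ univ) = Icc ε 1 ×ˢ Ioo (-π) π
      rw [Set.prod_inter_prod, Set.inter_univ, Set.inter_eq_self_of_subset_right]
      intro x hx
      exact lt_of_lt_of_le hε hx.1
    rw [hset]
  rw [step1, step2, ← step3, ← step4, ← step5, cov, rhs_eq]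



lemma step_cs {ε r : ℝ} (hε : 0 < ε) (hεr : ε ≤ r) {g' : ℝ → ℝ} (hc : Continuous g') :
    (∫ s in Ioc ε r, |g' s|) ^ 2
      ≤ (Real.log r - Real.log ε) * ∫ s in Ioc ε r, g' s ^ 2 * s := by
  set μ := volume.restrict (Ioc ε r) with hμ
  haveI : IsFiniteMeasure μ := ⟨by
    rw [hμ, Measure.restrict_apply_univ, Real.volume_Ioc]
    exact ENNReal.ofReal_lt_top⟩
  set u : ℝ → ℝ := fun s => (Real.sqrt s)⁻¹ with hu
  set w : ℝ → ℝ := fun s => |g' s| * Real.sqrt s with hw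
  have hr0 : 0 < r := lt_of_lt_of_le hε hεr
  -- u ∈ L²
  have hu2 : MemLp u (ENNReal.ofReal 2) μ := by
    refine MemLp.of_bound ((Real.continuous_sqrt.measurable.inv).aestronglyMeasurable)
      ((Real.sqrt ε)⁻¹) ?_
    rw [hμ, ae_restrict_iff' measurableSet_Ioc]
    filter_upwards with s hs
    rw [Real.norm_eq_abs, hu, abs_of_nonneg (by positivity)]
    exact inv_anti₀ (Real.sqrt_pos.2 hε) (Real.sqrt_le_sqrt hs.1.le)
  -- w ∈ L²
  have hwc : Continuous w := (hc.abs).mul Real.continuous_sqrt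
  obtain ⟨M, hM⟩ := (isCompact_Icc (a := ε) (b := r)).exists_bound_of_continuousOn
    hwc.continuousOn
  have hw2 : MemLp w (ENNReal.ofReal 2) μ := by
    refine MemLp.of_bound hwc.aestronglyMeasurable M ?_
    rw [hμ, ae_restrict_iff' measurableSet_Ioc]
    filter_upwards with s hs
    exact hM s (Ioc_subset_Icc_self hs)
  have hpq : Real.HolderConjugate 2 2 := Real.HolderConjugate.two_two
  have holder := integral_mul_le_Lp_mul_Lq_of_nonneg hpq
    (Filter.Eventually.of_forall fun s => by positivity)
    (Filter.Eventually.of_forall fun s => by positivity) hu2 hw2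
  -- rewrite the left side
  have hcong : ∫ s in Ioc ε r, |g' s| = ∫ s, u s * w s ∂μ := by
    rw [hμ]
    refine setIntegral_congr_fun measurableSet_Ioc fun s hs => ?_
    have h0 : (0:ℝ) < s := lt_of_lt_of_le hε hs.1.le
    have : Real.sqrt s ≠ 0 := (Real.sqrt_pos.2 h0).ne'
    simp only [hu, hw]
    field_simp
  -- rewrite the two Lp factors
  have hX : ∫ s, u s ^ (2:ℝ) ∂μ = Real.log r - Real.log ε := by
    have : ∫ s, u s ^ (2:ℝ) ∂μ = ∫ s in Ioc ε r, s⁻¹ := by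
      rw [hμ]
      refine setIntegral_congr_fun measurableSet_Ioc fun s hs => ?_
      have h0 : (0:ℝ) < s := lt_of_lt_of_le hε hs.1.le
      rw [show (2:ℝ) = ((2:ℕ):ℝ) by norm_num, Real.rpow_natCast]
      rw [hu]
      simp [inv_pow, Real.sq_sqrt h0.le]
    rw [this, ← intervalIntegral.integral_of_le hεr, integral_inv_of_pos hε hr0,
      Real.log_div hr0.ne' hε.ne']
  have hY : ∫ s, w s ^ (2:ℝ) ∂μ = ∫ s in Ioc ε r, g' s ^ 2 * s := by
    rw [hμ]
    refine setIntegral_congr_fun measurableSet_Ioc fun s hs => ?_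
    have h0 : (0:ℝ) < s := lt_of_lt_of_le hε hs.1.le
    rw [show (2:ℝ) = ((2:ℕ):ℝ) by norm_num, Real.rpow_natCast]
    rw [hw]
    rw [mul_pow, sq_abs, Real.sq_sqrt h0.le]
  have hX0 : 0 ≤ Real.log r - Real.log ε := by
    have := Real.log_le_log hε hεr
    linarith
  have hY0 : 0 ≤ ∫ s in Ioc ε r, g' s ^ 2 * s := by
    refine setIntegral_nonneg measurableSet_Ioc fun s hs => ?_
    have h0 : (0:ℝ) < s := lt_of_lt_of_le hε hs.1.le
    positivity
  rw [hcong]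
  calc (∫ s, u s * w s ∂μ) ^ 2
      ≤ ((∫ s, u s ^ (2:ℝ) ∂μ) ^ (1/(2:ℝ)) * (∫ s, w s ^ (2:ℝ) ∂μ) ^ (1/(2:ℝ))) ^ 2 := by
        apply pow_le_pow_left₀ ?_ holder
        refine integral_nonneg fun s => by positivity
    _ = (Real.log r - Real.log ε) * ∫ s in Ioc ε r, g' s ^ 2 * s := by
        rw [mul_pow, hX, hY, ← Real.rpow_natCast _ 2, ← Real.rpow_natCast _ 2,
          ← Real.rpow_mul hX0, ← Real.rpow_mul hY0]
        norm_num

lemma core {ε : ℝ} (hε : 0 < ε) (hε2 : ε < 1/2) {g g' : ℝ → ℝ}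
    (hd : ∀ s, HasDerivAt g (g' s) s) (hc : Continuous g') :
    g ε ^ 2 ≤ (16/3) * (∫ r in ε..1, g r ^ 2 * r)
      + 2 * Real.log (1/ε) * (∫ s in ε..1, g' s ^ 2 * s) := by
  have hg : Continuous g := by
    rw [continuous_iff_continuousAt]; exact fun s => (hd s).continuousAt
  have hε1 : ε ≤ 1 := by linarith
  set L := Real.log (1/ε) with hLdef
  have hL0 : 0 < L := Real.log_pos (by rw [lt_div_iff₀ hε]; linarith)
  set J := ∫ s in ε..1, g' s ^ 2 * s with hJdef
  have hJ0 : 0 ≤ J := by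
    refine intervalIntegral.integral_nonneg hε1 fun s hs => ?_
    have : 0 < s := lt_of_lt_of_le hε hs.1
    positivity
  set I := ∫ r in ε..1, g r ^ 2 * r with hIdef
  have hI0 : 0 ≤ I := by
    refine intervalIntegral.integral_nonneg hε1 fun s hs => ?_
    have : 0 < s := lt_of_lt_of_le hε hs.1
    positivity
  have hJint : IntegrableOn (fun s => g' s ^ 2 * s) (Ioc ε 1) volume :=
    ((hc.pow 2).mul continuous_id).integrableOn_Ioc
  -- key pointwise bound
  have key : ∀ r ∈ Icc ε 1, g ε ^ 2 * r ≤ (2 * g r ^ 2 + 2 * (L * J)) * r := by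
    intro r hr
    have hεr : ε ≤ r := hr.1
    have hftc : ∫ s in ε..r, g' s = g r - g ε :=
      intervalIntegral.integral_eq_sub_of_hasDerivAt (fun s _ => hd s)
        (hc.intervalIntegrable ε r)
    have habs : |∫ s in ε..r, g' s| ≤ ∫ s in Ioc ε r, |g' s| := by
      rw [← intervalIntegral.integral_of_le hεr]
      exact intervalIntegral.abs_integral_le_integral_abs hεr
    have hcs := step_cs hε hεr hc
    have hmono : (∫ s in Ioc ε r, g' s ^ 2 * s) ≤ J := by
      rw [hJdef, intervalIntegral.integral_of_le hε1]
      refine setIntegral_mono_set hJint ?_ ?_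
      · filter_upwards [ae_restrict_mem measurableSet_Ioc] with s hs
        have : 0 < s := lt_of_lt_of_le hε hs.1.le
        positivity
      · exact HasSubset.Subset.eventuallyLE (Ioc_subset_Ioc_right hr.2)
    have hlog : Real.log r - Real.log ε ≤ L := by
      rw [hLdef, Real.log_div one_ne_zero hε.ne', Real.log_one]
      have : Real.log r ≤ 0 := Real.log_nonpos (by linarith) hr.2
      linarith
    have hcs2 : (∫ s in Ioc ε r, |g' s|) ^ 2 ≤ L * J := by
      refine hcs.trans (mul_le_mul hlog hmono ?_ hL0.le)
      refine setIntegral_nonneg measurableSet_Ioc fun s hs => ?_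
      have : 0 < s := lt_of_lt_of_le hε hs.1.le
      positivity
    have h1 : g ε ^ 2 ≤ 2 * g r ^ 2 + 2 * (L * J) := by
      have hdiff : g ε = g r - ∫ s in ε..r, g' s := by rw [hftc]; ring
      have habs0 : 0 ≤ ∫ s in Ioc ε r, |g' s| :=
        setIntegral_nonneg measurableSet_Ioc fun s _ => abs_nonneg _
      have hsq : (∫ s in ε..r, g' s) ^ 2 ≤ L * J := by
        calc (∫ s in ε..r, g' s) ^ 2 = |∫ s in ε..r, g' s| ^ 2 := (sq_abs _).symm
          _ ≤ (∫ s in Ioc ε r, |g' s|) ^ 2 := by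
              exact pow_le_pow_left₀ (abs_nonneg _) habs 2
          _ ≤ L * J := hcs2
      rw [hdiff]
      nlinarith [sq_nonneg (g r + ∫ s in ε..r, g' s)]
    have hr0 : (0:ℝ) ≤ r := le_trans hε.le hεr
    exact mul_le_mul_of_nonneg_right h1 hr0
  -- integrate over r
  have hint1 : IntervalIntegrable (fun r => g ε ^ 2 * r) volume ε 1 :=
    (continuous_const.mul continuous_id).intervalIntegrable ε 1
  have hint2 : IntervalIntegrable (fun r => (2 * g r ^ 2 + 2 * (L * J)) * r) volume ε 1 :=
    (((continuous_const.mul (hg.pow 2)).add continuous_const).mul continuous_id).intervalIntegrable ε 1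
  have hmono2 := intervalIntegral.integral_mono_on hε1 hint1 hint2 key
  have hlhs : ∫ r in ε..1, g ε ^ 2 * r = g ε ^ 2 * ((1 - ε ^ 2)/2) := by
    rw [intervalIntegral.integral_const_mul, integral_id]
    norm_num
  have hrhs : ∫ r in ε..1, (2 * g r ^ 2 + 2 * (L * J)) * r
      = 2 * I + 2 * (L * J) * ((1 - ε ^ 2)/2) := by
    have : (fun r => (2 * g r ^ 2 + 2 * (L * J)) * r)
        = fun r => 2 * (g r ^ 2 * r) + 2 * (L * J) * r := by
      funext r; ring
    rw [this, intervalIntegral.integral_add, intervalIntegral.integral_const_mul,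
      intervalIntegral.integral_const_mul, integral_id, hIdef]
    · norm_num
    · exact (continuous_const.mul ((hg.pow 2).mul continuous_id)).intervalIntegrable ε 1
    · exact (continuous_const.mul continuous_id).intervalIntegrable ε 1
  rw [hlhs, hrhs] at hmono2
  have hc38 : (3:ℝ)/8 ≤ (1 - ε ^ 2)/2 := by nlinarith
  have hcpos : (0:ℝ) < (1 - ε ^ 2)/2 := by nlinarith
  have final : g ε ^ 2 * ((1 - ε ^ 2)/2)
      ≤ (16/3 * I + 2 * L * J) * ((1 - ε ^ 2)/2) := by
    nlinarith [mul_le_mul_of_nonneg_left hc38 hI0, mul_nonneg hL0.le hJ0]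
  exact le_of_mul_le_mul_right final hcpos


/-- Trace inequality on the planar annulus: there is a constant `C > 0` such that
for every `0 < ε < 1/2` and every (C¹, hence `W^{1,2}`) function `φ` on the annulus
`B₁ \ B_ε ⊂ ℝ²`, the squared `L²` norm of `φ` on the circle `∂B_ε` (arclength
measure, parametrized by `θ ↦ (ε cos θ, ε sin θ)` with length element `ε dθ`) is at
most `C ε log(1/ε)` times the squared `W^{1,2}` norm of `φ` on the annulus. -/
theorem stmt9 :
    ∃ C : ℝ, 0 < C ∧
      ∀ ε : ℝ, 0 < ε → ε < 1 / 2 →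
        ∀ φ : EuclideanSpace ℝ (Fin 2) → ℝ, ContDiff ℝ 1 φ →
          (∫ θ in (0 : ℝ)..(2 * π),
              (φ ((EuclideanSpace.equiv (Fin 2) ℝ).symm ![ε * Real.cos θ, ε * Real.sin θ])) ^ 2 * ε)
            ≤ C * ε * Real.log (1 / ε) *
              ((∫ x in Metric.closedBall (0 : EuclideanSpace ℝ (Fin 2)) 1 \ Metric.ball 0 ε,
                  (φ x) ^ 2)
                + ∫ x in Metric.closedBall (0 : EuclideanSpace ℝ (Fin 2)) 1 \ Metric.ball 0 ε,
                    ‖fderiv ℝ φ x‖ ^ 2) := by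
  have hlog2pos : (0:ℝ) < Real.log 2 := Real.log_pos one_lt_two
  refine ⟨16 / (3 * Real.log 2) + 2, by positivity, ?_⟩
  intro ε hε hε2 φ hφ
  have hε1 : ε ≤ 1 := by linarith
  have hDc : Continuous (fderiv ℝ φ) := hφ.continuous_fderiv one_ne_zero
  have hφd : Differentiable ℝ φ := hφ.differentiable one_ne_zero
  have hφc : Continuous φ := hφ.continuous
  have hlog2 : Real.log 2 ≤ Real.log (1 / ε) := by
    apply Real.log_le_log two_pos
    rw [le_div_iff₀ hε]; linarith
  have hL0 : 0 < Real.log (1 / ε) := lt_of_lt_of_le hlog2pos hlog2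
  have hA0 : 0 ≤ ∫ x in Metric.closedBall (0 : EuclideanSpace ℝ (Fin 2)) 1 \ Metric.ball 0 ε,
      (φ x) ^ 2 := setIntegral_nonneg
    (measurableSet_closedBall.diff measurableSet_ball) fun x _ => sq_nonneg _
  have hB0 : 0 ≤ ∫ x in Metric.closedBall (0 : EuclideanSpace ℝ (Fin 2)) 1 \ Metric.ball 0 ε,
      ‖fderiv ℝ φ x‖ ^ 2 := setIntegral_nonneg
    (measurableSet_closedBall.diff measurableSet_ball) fun x _ => sq_nonneg _
  -- per-θ estimate
  have key : ∀ θ : ℝ, φ (ε • vv θ) ^ 2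
      ≤ 16/3 * (∫ r in ε..1, φ (r • vv θ) ^ 2 * r)
        + 2 * Real.log (1 / ε) * (∫ r in ε..1, ‖fderiv ℝ φ (r • vv θ)‖ ^ 2 * r) := by
    intro θ
    have hd : ∀ s : ℝ, HasDerivAt (fun r : ℝ => φ (r • vv θ))
        (fderiv ℝ φ (s • vv θ) (vv θ)) s := by
      intro s
      have h1 : HasDerivAt (fun r : ℝ => r • vv θ) (vv θ) s := by
        simpa using (hasDerivAt_id s).smul_const (vv θ)
      exact ((hφd _).hasFDerivAt.comp_hasDerivAt s h1)
    have hc : Continuous fun s : ℝ => fderiv ℝ φ (s • vv θ) (vv θ) :=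
      (hDc.comp (continuous_id.smul continuous_const)).clm_apply continuous_const
    have hcore := core hε hε2 hd hc
    have hgrad : (∫ s in ε..1, (fderiv ℝ φ (s • vv θ) (vv θ)) ^ 2 * s)
        ≤ ∫ s in ε..1, ‖fderiv ℝ φ (s • vv θ)‖ ^ 2 * s := by
      refine intervalIntegral.integral_mono_on hε1 ?_ ?_ fun s hs => ?_
      · exact ((hc.pow 2).mul continuous_id).intervalIntegrable ε 1
      · exact ((((hDc.comp (continuous_id.smul continuous_const)).norm).pow 2).mul
          continuous_id).intervalIntegrable ε 1
      · have hs0 : (0:ℝ) ≤ s := le_trans hε.le hs.1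
        refine mul_le_mul_of_nonneg_right ?_ hs0
        have h1 : |fderiv ℝ φ (s • vv θ) (vv θ)| ≤ ‖fderiv ℝ φ (s • vv θ)‖ := by
          have := (fderiv ℝ φ (s • vv θ)).le_opNorm (vv θ)
          rwa [norm_vv, mul_one, Real.norm_eq_abs] at this
        calc (fderiv ℝ φ (s • vv θ) (vv θ)) ^ 2
            = |fderiv ℝ φ (s • vv θ) (vv θ)| ^ 2 := (sq_abs _).symm
          _ ≤ ‖fderiv ℝ φ (s • vv θ)‖ ^ 2 := pow_le_pow_left₀ (abs_nonneg _) h1 2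
    have h2L : (0:ℝ) ≤ 2 * Real.log (1 / ε) := by positivity
    nlinarith [mul_le_mul_of_nonneg_left hgrad h2L]
  -- continuity of the parametric integrals
  have hI1cont : Continuous fun θ => ∫ r in ε..1, φ (r • vv θ) ^ 2 * r := by
    apply intervalIntegral.continuous_parametric_intervalIntegral_of_continuous'
    exact ((hφc.comp (continuous_snd.smul (continuous_vv.comp continuous_fst))).pow 2).mul
      continuous_snd
  have hI2cont : Continuous fun θ => ∫ r in ε..1, ‖fderiv ℝ φ (r • vv θ)‖ ^ 2 * r := by
    apply intervalIntegral.continuous_parametric_intervalIntegral_of_continuous'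
    exact (((hDc.comp (continuous_snd.smul (continuous_vv.comp continuous_fst))).norm.pow 2)).mul
      continuous_snd
  have h2π : (0:ℝ) ≤ 2 * π := by positivity
  -- integrate the per-θ estimate and change variables
  have hmain : (∫ θ in (0:ℝ)..(2*π), φ (ε • vv θ) ^ 2)
      ≤ 16/3 * (∫ x in Metric.closedBall (0 : EuclideanSpace ℝ (Fin 2)) 1 \ Metric.ball 0 ε,
            (φ x) ^ 2)
        + 2 * Real.log (1 / ε) *
          (∫ x in Metric.closedBall (0 : EuclideanSpace ℝ (Fin 2)) 1 \ Metric.ball 0 ε,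
            ‖fderiv ℝ φ x‖ ^ 2) := by
    have hcov1 := polar_cov hε hε1 (fun x => φ x ^ 2) (hφc.pow 2)
    have hcov2 := polar_cov hε hε1 (fun x => ‖fderiv ℝ φ x‖ ^ 2) (hDc.norm.pow 2)
    have hstep : (∫ θ in (0:ℝ)..(2*π), φ (ε • vv θ) ^ 2)
        ≤ ∫ θ in (0:ℝ)..(2*π), (16/3 * (∫ r in ε..1, φ (r • vv θ) ^ 2 * r)
            + 2 * Real.log (1 / ε) * (∫ r in ε..1, ‖fderiv ℝ φ (r • vv θ)‖ ^ 2 * r)) := by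
      refine intervalIntegral.integral_mono_on h2π ?_ ?_ fun θ _ => key θ
      · exact ((hφc.comp (continuous_vv.const_smul ε)).pow 2).intervalIntegrable 0 (2*π)
      · exact ((continuous_const.mul hI1cont).add
          (continuous_const.mul hI2cont)).intervalIntegrable 0 (2*π)
    refine hstep.trans ?_
    rw [intervalIntegral.integral_add ((hI1cont.intervalIntegrable 0 (2*π)).const_mul (16/3))
      ((hI2cont.intervalIntegrable 0 (2*π)).const_mul (2 * Real.log (1 / ε))),
      intervalIntegral.integral_const_mul, intervalIntegral.integral_const_mul, hcov1, hcov2]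
  -- rewrite the LHS of the goal
  have hlhs : (∫ θ in (0:ℝ)..(2*π),
      (φ ((EuclideanSpace.equiv (Fin 2) ℝ).symm ![ε * Real.cos θ, ε * Real.sin θ])) ^ 2 * ε)
      = (∫ θ in (0:ℝ)..(2*π), φ (ε • vv θ) ^ 2) * ε := by
    rw [← intervalIntegral.integral_mul_const]
    refine intervalIntegral.integral_congr fun θ _ => ?_
    rw [smul_vv]
  rw [hlhs]
  -- final arithmetic, with opaque abbreviations
  set L := Real.log (1 / ε) with hLdef
  set A := ∫ x in Metric.closedBall (0 : EuclideanSpace ℝ (Fin 2)) 1 \ Metric.ball 0 ε,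
      (φ x) ^ 2 with hAdef
  set B := ∫ x in Metric.closedBall (0 : EuclideanSpace ℝ (Fin 2)) 1 \ Metric.ball 0 ε,
      ‖fderiv ℝ φ x‖ ^ 2 with hBdef
  set S := ∫ θ in (0:ℝ)..(2*π), φ (ε • vv θ) ^ 2 with hSdef
  clear_value L A B S
  clear hlhs key hI1cont hI2cont
  have hfin : (16/3 * A + 2 * L * B) * ε
      ≤ (16 / (3 * Real.log 2) + 2) * ε * L * (A + B) := by
    have hd0 : (0:ℝ) ≤ 16 / (3 * Real.log 2) := by positivity
    have hfe : 16 / (3 * Real.log 2) * Real.log 2 = 16 / 3 := by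
      field_simp
    have h1 : 16/3 * A ≤ 16 / (3 * Real.log 2) * L * A := by
      have h := mul_nonneg (mul_nonneg hd0 hA0) (sub_nonneg.2 hlog2)
      nlinarith [h, hfe]
    have h2 : 16 / (3 * Real.log 2) * L * A + 2 * L * B
        ≤ (16 / (3 * Real.log 2) + 2) * L * (A + B) := by
      nlinarith [mul_nonneg hd0 (mul_nonneg hL0.le hB0), mul_nonneg hL0.le hA0]
    calc (16/3 * A + 2 * L * B) * ε
        ≤ (16 / (3 * Real.log 2) * L * A + 2 * L * B) * ε :=
          mul_le_mul_of_nonneg_right (by linarith) hε.le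
      _ ≤ ((16 / (3 * Real.log 2) + 2) * L * (A + B)) * ε :=
          mul_le_mul_of_nonneg_right h2 hε.le
      _ = (16 / (3 * Real.log 2) + 2) * ε * L * (A + B) := by ring
  calc S * ε ≤ (16/3 * A + 2 * L * B) * ε := mul_le_mul_of_nonneg_right hmain hε.le
    _ ≤ (16 / (3 * Real.log 2) + 2) * ε * L * (A + B) := hfin
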